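/- arXiv:1208.2126 — 3 statements merged into one kernel-verified Lean document; each statement's English description precedes it below -/
import Mathlib

section
/- Every linear anti-symplectic involution S on ℝ^{2n} is conjugate to the standard involution R by a symplectic matrix: there exists ψ ∈ Sp(n) with ψ⁻¹Rψ = S. -/
open Matrix

noncomputable section

/-- The standard symplectic structure matrix on `ℝ^{2n} = ℝ^n ⊕ ℝ^n`. -/
def J (n : ℕ) : Matrix (Fin n ⊕ Fin n) (Fin n ⊕ Fin n) ℝ :=
  Matrix.fromBlocks 0 1 (-1) 0

/-- The standard symplectic form `ω(v,w) = ⟨v, J w⟩`. -/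
def symForm (n : ℕ) (v w : Fin n ⊕ Fin n → ℝ) : ℝ :=
  v ⬝ᵥ (J n).mulVec w

/-- A matrix is symplectic if it preserves `ω`. -/
def IsSymplectic (n : ℕ) (ψ : Matrix (Fin n ⊕ Fin n) (Fin n ⊕ Fin n) ℝ) : Prop :=
  ∀ v w, symForm n (ψ.mulVec v) (ψ.mulVec w) = symForm n v w

/-- A linear anti-symplectic involution: `S² = 1` and `ω(Sv,Sw) = -ω(v,w)`. -/
def IsAntiSympInv (n : ℕ) (S : Matrix (Fin n ⊕ Fin n) (Fin n ⊕ Fin n) ℝ) : Prop :=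
  S * S = 1 ∧ ∀ v w, symForm n (S.mulVec v) (S.mulVec w) = - symForm n v w

/-- The standard anti-symplectic involution `R = diag(1,-1)`. -/
def Rmat (n : ℕ) : Matrix (Fin n ⊕ Fin n) (Fin n ⊕ Fin n) ℝ :=
  Matrix.fromBlocks 1 0 0 (-1)

/-- A Lagrangian subspace: `n`-dimensional and `ω` vanishes on it. -/
def IsLagrangian (n : ℕ) (L : Submodule ℝ (Fin n ⊕ Fin n → ℝ)) : Prop :=
  Module.finrank ℝ L = n ∧ ∀ v ∈ L, ∀ w ∈ L, symForm n v w = 0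

-- basic facts
lemma myJ_transpose (n : ℕ) : (J n)ᵀ = -(J n) := by
  ext (i|i) (j|j) <;> simp [_root_.J, Matrix.one_apply, eq_comm]

lemma myJ_mul_J (n : ℕ) : J n * J n = -1 := by
  show Matrix.fromBlocks 0 1 (-1) 0 * Matrix.fromBlocks 0 1 (-1) 0 = -1
  rw [Matrix.fromBlocks_multiply]
  ext (i|i) (j|j) <;> simp [Matrix.one_apply]

lemma symForm_skew (n : ℕ) (v w : Fin n ⊕ Fin n → ℝ) :
    symForm n v w = - symForm n w v := by
  rw [symForm, symForm, Matrix.dotProduct_mulVec, dotProduct_comm,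
    ← Matrix.mulVec_transpose, myJ_transpose]
  simp [Matrix.neg_mulVec]

lemma symForm_right_nondeg (n : ℕ) (w : Fin n ⊕ Fin n → ℝ)
    (h : ∀ v, symForm n v w = 0) : w = 0 := by
  have h1 : (J n).mulVec w = 0 := by
    have := h ((J n).mulVec w)
    rwa [symForm, dotProduct_self_eq_zero] at this
  have := congrArg (fun x => (J n).mulVec x) h1
  simpa [Matrix.mulVec_mulVec, myJ_mul_J, Matrix.neg_mulVec, neg_eq_zero] using this

lemma symForm_add_left (n : ℕ) (u v w : Fin n ⊕ Fin n → ℝ) :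
    symForm n (u + v) w = symForm n u w + symForm n v w := by
  simp [symForm, add_dotProduct]


theorem stmt6 (n : ℕ) (S : Matrix (Fin n ⊕ Fin n) (Fin n ⊕ Fin n) ℝ)
    (hS : IsAntiSympInv n S) :
    ∃ ψ : Matrix (Fin n ⊕ Fin n) (Fin n ⊕ Fin n) ℝ,
      IsSymplectic n ψ ∧ ψ⁻¹ * Rmat n * ψ = S := by
  obtain ⟨h1, h2⟩ := hS
  have hSS : ∀ x, S.mulVec (S.mulVec x) = x := by
    intro x; rw [Matrix.mulVec_mulVec, h1, Matrix.one_mulVec]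
  set Vp := LinearMap.ker (Matrix.mulVecLin (S - 1)) with hVp
  set Vm := LinearMap.ker (Matrix.mulVecLin (S + 1)) with hVm
  have memp : ∀ x, x ∈ Vp ↔ S.mulVec x = x := by
    intro x
    simp [hVp, LinearMap.mem_ker, Matrix.sub_mulVec, Matrix.one_mulVec, sub_eq_zero]
  have memm : ∀ x, x ∈ Vm ↔ S.mulVec x = -x := by
    intro x
    simp [hVm, LinearMap.mem_ker, Matrix.add_mulVec, Matrix.one_mulVec, add_eq_zero_iff_eq_neg]
  have isoP : ∀ v ∈ Vp, ∀ w ∈ Vp, symForm n v w = 0 := by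
    intro v hv w hw
    have h := h2 v w
    rw [(memp v).1 hv, (memp w).1 hw] at h
    linarith
  have isoM : ∀ v ∈ Vm, ∀ w ∈ Vm, symForm n v w = 0 := by
    intro v hv w hw
    have h := h2 v w
    rw [(memm v).1 hv, (memm w).1 hw] at h
    simp only [symForm, Matrix.mulVec_neg, neg_dotProduct, dotProduct_neg,
      neg_neg] at h ⊢
    linarith
  have codis : Vp ⊔ Vm = ⊤ := by
    rw [eq_top_iff]
    intro x _
    have hxp : (2⁻¹ : ℝ) • (x + S.mulVec x) ∈ Vp := by
      rw [memp, Matrix.mulVec_smul, Matrix.mulVec_add, hSS, add_comm]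
    have hxm : (2⁻¹ : ℝ) • (x - S.mulVec x) ∈ Vm := by
      rw [memm, Matrix.mulVec_smul, Matrix.mulVec_sub, hSS]
      module
    exact Submodule.mem_sup.2 ⟨_, hxp, _, hxm, by module⟩
  have hdis : Vp ⊓ Vm = ⊥ := by
    rw [eq_bot_iff]
    intro x hx
    have hx1 := (memp x).1 hx.1
    have hx2 := (memm x).1 hx.2
    have : x = 0 := by
      funext i
      have := congrFun (hx1.symm.trans hx2) i
      simp only [Pi.neg_apply] at this
      simpa using by linarith
    simp [this]
  have decomp : ∀ x : (Fin n ⊕ Fin n → ℝ), ∃ a ∈ Vp, ∃ b ∈ Vm, x = a + b := by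
    intro x
    have hx : x ∈ Vp ⊔ Vm := by rw [codis]; trivial
    obtain ⟨a, ha, b, hb, hab⟩ := Submodule.mem_sup.1 hx
    exact ⟨a, ha, b, hb, hab.symm⟩
  have pairPM : ∀ w ∈ Vm, (∀ u ∈ Vp, symForm n u w = 0) → w = 0 := by
    intro w hw h
    apply symForm_right_nondeg n
    intro v
    obtain ⟨a, ha, c, hc, rfl⟩ := decomp v
    rw [symForm_add_left, h a ha, isoM c hc w hw, add_zero]
  have pairMP : ∀ w ∈ Vp, (∀ u ∈ Vm, symForm n u w = 0) → w = 0 := by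
    intro w hw h
    apply symForm_right_nondeg n
    intro v
    obtain ⟨a, ha, c, hc, rfl⟩ := decomp v
    rw [symForm_add_left, h c hc, isoP a ha w hw, add_zero]
  -- pairing maps into duals
  let bil : (Fin n ⊕ Fin n → ℝ) →ₗ[ℝ] (Fin n ⊕ Fin n → ℝ) →ₗ[ℝ] ℝ :=
    Matrix.toLinearMap₂' ℝ (J n)
  have hbil : ∀ v w, bil v w = symForm n v w := fun v w =>
    Matrix.toLinearMap₂'_apply' _ _ _
  let fPM : Vm →ₗ[ℝ] Module.Dual ℝ Vp :=
    Vp.subtype.dualMap ∘ₗ (bil.flip ∘ₗ Vm.subtype)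
  let fMP : Vp →ₗ[ℝ] Module.Dual ℝ Vm :=
    Vm.subtype.dualMap ∘ₗ (bil.flip ∘ₗ Vp.subtype)
  have hfPM : ∀ (w : Vm) (u : Vp), fPM w u = symForm n u.1 w.1 := fun w u => hbil _ _
  have hfMP : ∀ (w : Vp) (u : Vm), fMP w u = symForm n u.1 w.1 := fun w u => hbil _ _
  have hinjPM : Function.Injective fPM := by
    rw [injective_iff_map_eq_zero]
    intro w hw0
    ext1
    apply pairPM w.1 w.2
    intro u hu
    have := DFunLike.congr_fun hw0 (⟨u, hu⟩ : Vp)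
    rw [hfPM] at this
    simpa using this
  have hinjMP : Function.Injective fMP := by
    rw [injective_iff_map_eq_zero]
    intro w hw0
    ext1
    apply pairMP w.1 w.2
    intro u hu
    have := DFunLike.congr_fun hw0 (⟨u, hu⟩ : Vm)
    rw [hfMP] at this
    simpa using this
  have hle1 : Module.finrank ℝ Vm ≤ Module.finrank ℝ Vp :=
    (LinearMap.finrank_le_finrank_of_injective hinjPM).trans_eq Subspace.dual_finrank_eq
  have hle2 : Module.finrank ℝ Vp ≤ Module.finrank ℝ Vm :=
    (LinearMap.finrank_le_finrank_of_injective hinjMP).trans_eq Subspace.dual_finrank_eq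
  have hsum : Module.finrank ℝ Vp + Module.finrank ℝ Vm = n + n := by
    have h := Submodule.finrank_sup_add_finrank_inf_eq Vp Vm
    rw [codis, hdis] at h
    simpa [finrank_top, Module.finrank_pi] using h.symm
  have hp : Module.finrank ℝ Vp = n := by omega
  have hm : Module.finrank ℝ Vm = n := by omega
  -- basis of Vp and ω-dual family in Vm
  let b : Module.Basis (Fin n) ℝ Vp := Module.finBasisOfFinrankEq ℝ Vp hp
  have hsurj : Function.Surjective fPM :=
    (LinearMap.injective_iff_surjective_of_finrank_eq_finrank
      (by rw [hm, Subspace.dual_finrank_eq, hp])).1 hinjPM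
  choose v hv using fun j => hsurj (b.coord j)
  have hpair : ∀ i j, symForm n (b i).1 (v j).1 = if i = j then 1 else 0 := by
    intro i j
    have h := DFunLike.congr_fun (hv j) (b i)
    rw [hfPM] at h
    rw [h, Module.Basis.coord_apply, Module.Basis.repr_self, Finsupp.single_apply]
  -- matrix whose columns are the new symplectic basis
  set col : Fin n ⊕ Fin n → (Fin n ⊕ Fin n → ℝ) :=
    Sum.elim (fun i => (b i).1) (fun j => (v j).1) with hcoldef
  set φ : Matrix (Fin n ⊕ Fin n) (Fin n ⊕ Fin n) ℝ :=
    Matrix.of (fun r c => col c r) with hphidef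
  have hωcol : ∀ c d, symForm n (col c) (col d) = J n c d := by
    rintro (i | i) (j | j)
    · simpa [hcoldef, _root_.J] using isoP _ (b i).2 _ (b j).2
    · simpa [hcoldef, _root_.J, Matrix.one_apply] using hpair i j
    · rw [hcoldef]
      simp only [Sum.elim_inl, Sum.elim_inr]
      rw [symForm_skew, hpair j i]
      simp [_root_.J, Matrix.one_apply, eq_comm]
    · simpa [hcoldef, _root_.J] using isoM _ (v i).2 _ (v j).2
  have hentry : ∀ c d, (φᵀ * J n * φ) c d = symForm n (col c) (col d) := by
    intro c d
    simp only [Matrix.mul_apply, Matrix.transpose_apply, symForm, Matrix.mulVec,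
      dotProduct, hphidef, Matrix.of_apply, Finset.sum_mul, Finset.mul_sum]
    rw [Finset.sum_comm]
    exact Finset.sum_congr rfl fun k _ => Finset.sum_congr rfl fun l _ => by ring
  have hφJφ : φᵀ * J n * φ = J n := by
    ext c d; rw [hentry, hωcol]
  -- invertibility
  have hJdet : IsUnit (J n).det :=
    Matrix.isUnit_det_of_right_inverse (B := -(J n)) (by rw [mul_neg, myJ_mul_J, neg_neg])
  have hφdet : IsUnit φ.det := by
    rw [isUnit_iff_ne_zero]
    intro h0
    have hd := congrArg Matrix.det hφJφ
    rw [Matrix.det_mul, Matrix.det_mul, Matrix.det_transpose, h0] at hd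
    simp only [zero_mul, mul_zero] at hd
    exact isUnit_iff_ne_zero.1 hJdet hd.symm
  -- S ∘ φ = φ ∘ R
  have hScol : ∀ c, S.mulVec (col c) = Sum.elim (fun i => (b i).1) (fun j => -(v j).1) c := by
    rintro (i | i)
    · simpa [hcoldef] using (memp _).1 (b i).2
    · simpa [hcoldef] using (memm _).1 (v i).2
  have hSφ : S * φ = φ * Rmat n := by
    ext k c
    have lhs : (S * φ) k c = S.mulVec (col c) k := by
      simp [Matrix.mul_apply, Matrix.mulVec, dotProduct, hphidef]
    rw [lhs, hScol]
    rcases c with i | i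
    · simp only [Sum.elim_inl]
      rw [Matrix.mul_apply, Fintype.sum_sum_type]
      simp [Rmat, hphidef, Matrix.one_apply, hcoldef]
    · simp only [Sum.elim_inr]
      rw [Matrix.mul_apply, Fintype.sum_sum_type]
      simp [Rmat, hphidef, Matrix.one_apply, hcoldef]
  -- conclusion
  set ψ := φ⁻¹ with hpsidef
  have hinv1 : φ * ψ = 1 := Matrix.mul_nonsing_inv φ hφdet
  have hφsym : ∀ a c, symForm n (φ.mulVec a) (φ.mulVec c) = symForm n a c := by
    intro a c
    rw [symForm, symForm, Matrix.mulVec_mulVec, Matrix.dotProduct_mulVec,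
      ← Matrix.vecMul_transpose, Matrix.vecMul_vecMul, ← Matrix.mul_assoc, hφJφ,
      ← Matrix.dotProduct_mulVec]
  have hψ : IsSymplectic n ψ := by
    intro x y
    have hx : φ.mulVec (ψ.mulVec x) = x := by
      rw [Matrix.mulVec_mulVec, hinv1, Matrix.one_mulVec]
    have hy : φ.mulVec (ψ.mulVec y) = y := by
      rw [Matrix.mulVec_mulVec, hinv1, Matrix.one_mulVec]
    calc symForm n (ψ.mulVec x) (ψ.mulVec y)
        = symForm n (φ.mulVec (ψ.mulVec x)) (φ.mulVec (ψ.mulVec y)) := (hφsym _ _).symm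
      _ = symForm n x y := by rw [hx, hy]
  refine ⟨ψ, hψ, ?_⟩
  have hinvinv : ψ⁻¹ = φ := by rw [hpsidef, Matrix.nonsing_inv_nonsing_inv φ hφdet]
  rw [hinvinv, ← hSφ, Matrix.mul_assoc, hinv1, mul_one]
end
end

section
/- If a symplectic matrix φ can be written as a product φ = TS of two linear anti-symplectic involutions T, S, then φ is conjugate within Sp(n) to an element of Sp^R(n): there exists ψ ∈ Sp(n) with ψφψ⁻¹ ∈ Sp^R(n). -/
open Matrix

noncomputable section

namespace Stmt8Aux

variable {n : ℕ}

lemma J_mul_J (n : ℕ) : _root_.J n * _root_.J n = -1 := by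
  have h1 : (-1 : Matrix (Fin n ⊕ Fin n) (Fin n ⊕ Fin n) ℝ)
      = Matrix.fromBlocks (-1) 0 0 (-1) := by
    rw [← Matrix.fromBlocks_one (l := Fin n) (m := Fin n) (α := ℝ), Matrix.fromBlocks_neg]
    norm_num
  rw [_root_.J, Matrix.fromBlocks_multiply, h1]
  norm_num

lemma J_mul_negJ (n : ℕ) : _root_.J n * (-(_root_.J n)) = 1 := by
  rw [Matrix.mul_neg, J_mul_J, neg_neg]

lemma negJ_mul_J (n : ℕ) : (-(_root_.J n)) * _root_.J n = 1 := by
  rw [Matrix.neg_mul, J_mul_J, neg_neg]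

lemma J_transpose (n : ℕ) : (_root_.J n)ᵀ = -(_root_.J n) := by
  rw [_root_.J, Matrix.fromBlocks_transpose, Matrix.fromBlocks_neg]
  norm_num

lemma J_mulVec_eq_zero {v : Fin n ⊕ Fin n → ℝ} (h : (_root_.J n) *ᵥ v = 0) : v = 0 := by
  have : (-(_root_.J n)) *ᵥ ((_root_.J n) *ᵥ v) = v := by
    rw [Matrix.mulVec_mulVec, negJ_mul_J, Matrix.one_mulVec]
  rw [h, Matrix.mulVec_zero] at this
  exact this.symm

lemma symForm_antisymm (v w : Fin n ⊕ Fin n → ℝ) : symForm n v w = - symForm n w v := by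
  unfold symForm
  rw [Matrix.dotProduct_mulVec]
  have : v ᵥ* _root_.J n = (_root_.J n)ᵀ *ᵥ v := (Matrix.mulVec_transpose _ _).symm
  rw [this, J_transpose, Matrix.neg_mulVec, neg_dotProduct, dotProduct_comm]

lemma symForm_add_left (u v w : Fin n ⊕ Fin n → ℝ) :
    symForm n (u + v) w = symForm n u w + symForm n v w := by
  simp [symForm, add_dotProduct]

lemma symForm_smul_left (c : ℝ) (v w : Fin n ⊕ Fin n → ℝ) :
    symForm n (c • v) w = c * symForm n v w := by
  simp [symForm, smul_dotProduct]

lemma symForm_nondeg {v : Fin n ⊕ Fin n → ℝ} (h : ∀ u, symForm n u v = 0) : v = 0 := by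
  apply J_mulVec_eq_zero (n := n)
  funext i
  have := h (Pi.single i 1)
  rwa [symForm, single_dotProduct, one_mul] at this

lemma mulVec_dot (A : Matrix (Fin n ⊕ Fin n) (Fin n ⊕ Fin n) ℝ) (v u : Fin n ⊕ Fin n → ℝ) :
    (A *ᵥ v) ⬝ᵥ u = v ⬝ᵥ (Aᵀ *ᵥ u) := by
  rw [dotProduct_comm, Matrix.dotProduct_mulVec, dotProduct_comm,
    Matrix.mulVec_transpose]

lemma isSymplectic_of_matrix {A : Matrix (Fin n ⊕ Fin n) (Fin n ⊕ Fin n) ℝ}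
    (h : Aᵀ * _root_.J n * A = _root_.J n) : IsSymplectic n A := by
  intro v w
  unfold symForm
  rw [Matrix.mulVec_mulVec (v := w) (M := _root_.J n) (N := A), mulVec_dot,
    Matrix.mulVec_mulVec, ← Matrix.mul_assoc, h]

lemma isSymplectic_mul {A B : Matrix (Fin n ⊕ Fin n) (Fin n ⊕ Fin n) ℝ}
    (hA : IsSymplectic n A) (hB : IsSymplectic n B) : IsSymplectic n (A * B) := by
  intro v w
  rw [← Matrix.mulVec_mulVec, ← Matrix.mulVec_mulVec, hA, hB]

lemma Rmat_sq (n : ℕ) : Rmat n * Rmat n = 1 := by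
  simp [Rmat, Matrix.fromBlocks_multiply]

lemma Rmat_diag (n : ℕ) :
    Rmat n = Matrix.diagonal (Sum.elim (fun _ => (1:ℝ)) (fun _ => (-1:ℝ))) := by
  ext i j
  cases i <;> cases j <;>
    simp [Rmat, Matrix.fromBlocks, Matrix.diagonal, Matrix.one_apply, Sum.inl.injEq,
      Sum.inr.injEq] <;> aesop

/-- Key construction: any anti-symplectic involution is symplectically conjugate to `R`. -/
lemma exists_conj (n : ℕ) (S : Matrix (Fin n ⊕ Fin n) (Fin n ⊕ Fin n) ℝ)
    (hS : IsAntiSympInv n S) :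
    ∃ Q : Matrix (Fin n ⊕ Fin n) (Fin n ⊕ Fin n) ℝ,
      Qᵀ * _root_.J n * Q = _root_.J n ∧ S * Q = Q * Rmat n ∧ IsUnit Q.det := by
  obtain ⟨hS1, hS2⟩ := hS
  -- the ±1 eigenspaces of S
  set Ep : Submodule ℝ (Fin n ⊕ Fin n → ℝ) := LinearMap.ker (Matrix.mulVecLin (S - 1)) with hEp
  set Em : Submodule ℝ (Fin n ⊕ Fin n → ℝ) := LinearMap.ker (Matrix.mulVecLin (S + 1)) with hEm
  have memP : ∀ v, v ∈ Ep ↔ S *ᵥ v = v := by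
    intro v
    simp [hEp, LinearMap.mem_ker, Matrix.sub_mulVec, Matrix.one_mulVec, sub_eq_zero]
  have memM : ∀ v, v ∈ Em ↔ S *ᵥ v = -v := by
    intro v
    simp [hEm, LinearMap.mem_ker, Matrix.add_mulVec, Matrix.one_mulVec,
      add_eq_zero_iff_eq_neg]
  have hSS : ∀ v, S *ᵥ (S *ᵥ v) = v := by
    intro v; rw [Matrix.mulVec_mulVec, hS1, Matrix.one_mulVec]
  -- E+ and E- are complementary
  have hsup : Ep ⊔ Em = ⊤ := by
    rw [Submodule.eq_top_iff']
    intro v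
    refine Submodule.mem_sup.2 ⟨(1/2 : ℝ) • (v + S *ᵥ v), ?_, (1/2 : ℝ) • (v - S *ᵥ v), ?_, ?_⟩
    · rw [memP]
      rw [Matrix.mulVec_smul, Matrix.mulVec_add, hSS]
      rw [add_comm]
    · rw [memM]
      rw [Matrix.mulVec_smul, Matrix.mulVec_sub, hSS]
      rw [← smul_neg, neg_sub]
    · funext i; simp; ring
  have hinf : Ep ⊓ Em = ⊥ := by
    rw [Submodule.eq_bot_iff]
    intro v hv
    obtain ⟨h1, h2⟩ := Submodule.mem_inf.mp hv
    rw [memP] at h1; rw [memM] at h2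
    have hvv : v = -v := h1.symm.trans h2
    funext i
    have := congrFun hvv i
    simp only [Pi.neg_apply, Pi.zero_apply] at this ⊢
    linarith
  -- isotropy of the eigenspaces
  have hisoP : ∀ v ∈ Ep, ∀ w ∈ Ep, symForm n v w = 0 := by
    intro v hv w hw
    have h := hS2 v w
    rw [(memP v).1 hv, (memP w).1 hw] at h
    linarith
  have hisoM : ∀ v ∈ Em, ∀ w ∈ Em, symForm n v w = 0 := by
    intro v hv w hw
    have h := hS2 v w
    rw [(memM v).1 hv, (memM w).1 hw] at h
    have h2 : symForm n (-v) (-w) = symForm n v w := by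
      simp [symForm, neg_dotProduct, Matrix.mulVec_neg]
    rw [h2] at h
    linarith
  have symForm_add_r : ∀ (u v w : Fin n ⊕ Fin n → ℝ),
      symForm n u (v + w) = symForm n u v + symForm n u w := by
    intro u v w; simp [symForm, Matrix.mulVec_add, dotProduct_add]
  have symForm_smul_r : ∀ (c : ℝ) (u v : Fin n ⊕ Fin n → ℝ),
      symForm n u (c • v) = c * symForm n u v := by
    intro c u v
    simp [symForm, Matrix.mulVec_smul, dotProduct_smul, smul_eq_mul]
  -- the pairing maps into the duals
  let Φ : Em →ₗ[ℝ] Module.Dual ℝ Ep :=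
    { toFun := fun v =>
        { toFun := fun x => symForm n (x : Fin n ⊕ Fin n → ℝ) (v : Fin n ⊕ Fin n → ℝ)
          map_add' := by
            intro x y; simp only [Submodule.coe_add]; exact symForm_add_left _ _ _
          map_smul' := by
            intro c x
            simp only [Submodule.coe_smul, RingHom.id_apply, smul_eq_mul]
            exact symForm_smul_left _ _ _ }
      map_add' := by
        intro v w; apply LinearMap.ext; intro x
        simp only [LinearMap.coe_mk, AddHom.coe_mk, Submodule.coe_add, LinearMap.add_apply]
        exact symForm_add_r _ _ _
      map_smul' := by
        intro c v; apply LinearMap.ext; intro x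
        simp only [LinearMap.coe_mk, AddHom.coe_mk, Submodule.coe_smul, LinearMap.smul_apply,
          RingHom.id_apply, smul_eq_mul]
        exact symForm_smul_r _ _ _ }
  let Φ' : Ep →ₗ[ℝ] Module.Dual ℝ Em :=
    { toFun := fun v =>
        { toFun := fun x => symForm n (x : Fin n ⊕ Fin n → ℝ) (v : Fin n ⊕ Fin n → ℝ)
          map_add' := by
            intro x y; simp only [Submodule.coe_add]; exact symForm_add_left _ _ _
          map_smul' := by
            intro c x
            simp only [Submodule.coe_smul, RingHom.id_apply, smul_eq_mul]
            exact symForm_smul_left _ _ _ }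
      map_add' := by
        intro v w; apply LinearMap.ext; intro x
        simp only [LinearMap.coe_mk, AddHom.coe_mk, Submodule.coe_add, LinearMap.add_apply]
        exact symForm_add_r _ _ _
      map_smul' := by
        intro c v; apply LinearMap.ext; intro x
        simp only [LinearMap.coe_mk, AddHom.coe_mk, Submodule.coe_smul, LinearMap.smul_apply,
          RingHom.id_apply, smul_eq_mul]
        exact symForm_smul_r _ _ _ }
  -- a vector pairing to zero with everything is zero
  have key0 : ∀ v : Fin n ⊕ Fin n → ℝ, (∀ x ∈ Ep, symForm n x v = 0) →
      (∀ x ∈ Em, symForm n x v = 0) → v = 0 := by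
    intro v hp hm
    apply symForm_nondeg (n := n)
    intro u
    have hu : u ∈ Ep ⊔ Em := by rw [hsup]; trivial
    obtain ⟨a, ha, c, hc, rfl⟩ := Submodule.mem_sup.1 hu
    rw [symForm_add_left, hp a ha, hm c hc, add_zero]
  have hΦinj : Function.Injective Φ := by
    rw [← LinearMap.ker_eq_bot]
    rw [Submodule.eq_bot_iff]
    intro v hv
    have hv' : ∀ x ∈ Ep, symForm n x (v : Fin n ⊕ Fin n → ℝ) = 0 := by
      intro x hx
      have := congrArg (fun f => f (⟨x, hx⟩ : Ep)) ((LinearMap.mem_ker).1 hv)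
      simpa [Φ] using this
    have hv'' : ∀ x ∈ Em, symForm n x (v : Fin n ⊕ Fin n → ℝ) = 0 := fun x hx =>
      hisoM x hx _ v.2
    exact Subtype.ext (key0 _ hv' hv'')
  have hΦ'inj : Function.Injective Φ' := by
    rw [← LinearMap.ker_eq_bot]
    rw [Submodule.eq_bot_iff]
    intro v hv
    have hv' : ∀ x ∈ Em, symForm n x (v : Fin n ⊕ Fin n → ℝ) = 0 := by
      intro x hx
      have := congrArg (fun f => f (⟨x, hx⟩ : Em)) ((LinearMap.mem_ker).1 hv)
      simpa [Φ'] using this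
    have hv'' : ∀ x ∈ Ep, symForm n x (v : Fin n ⊕ Fin n → ℝ) = 0 := fun x hx =>
      hisoP x hx _ v.2
    exact Subtype.ext (key0 _ hv'' hv')
  -- dimension count
  have hVdim : Module.finrank ℝ (Fin n ⊕ Fin n → ℝ) = 2 * n := by
    rw [Module.finrank_fintype_fun_eq_card, Fintype.card_sum, Fintype.card_fin]
    ring
  have hsumdim : Module.finrank ℝ Ep + Module.finrank ℝ Em = 2 * n := by
    have h := Submodule.finrank_sup_add_finrank_inf_eq Ep Em
    rw [hsup, hinf, finrank_top, hVdim, finrank_bot, add_zero] at h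
    omega
  have hle1 : Module.finrank ℝ Em ≤ Module.finrank ℝ Ep := by
    have h1 := LinearMap.finrank_le_finrank_of_injective hΦinj
    rwa [Subspace.dual_finrank_eq] at h1
  have hle2 : Module.finrank ℝ Ep ≤ Module.finrank ℝ Em := by
    have h1 := LinearMap.finrank_le_finrank_of_injective hΦ'inj
    rwa [Subspace.dual_finrank_eq] at h1
  have hP : Module.finrank ℝ Ep = n := by omega
  have hM : Module.finrank ℝ Em = n := by omega
  -- Φ is bijective
  have hΦsurj : Function.Surjective Φ := by
    have hd : Module.finrank ℝ Em = Module.finrank ℝ (Module.Dual ℝ Ep) := by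
      rw [Subspace.dual_finrank_eq]; omega
    exact (LinearMap.injective_iff_surjective_of_finrank_eq_finrank hd).1 hΦinj
  let e : Em ≃ₗ[ℝ] Module.Dual ℝ Ep := LinearEquiv.ofBijective Φ ⟨hΦinj, hΦsurj⟩
  -- basis of Ep and dual vectors in Em
  let b : Module.Basis (Fin n) ℝ Ep := Module.finBasisOfFinrankEq ℝ Ep hP
  let y : Fin n → Em := fun j => e.symm (b.dualBasis j)
  have hpair : ∀ i j, symForm n ((b i : Fin n ⊕ Fin n → ℝ)) ((y j : Fin n ⊕ Fin n → ℝ))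
      = if i = j then 1 else 0 := by
    intro i j
    have h2 : Φ (y j) = b.dualBasis j := e.apply_symm_apply (b.dualBasis j)
    calc symForm n (b i : Fin n ⊕ Fin n → ℝ) (y j : Fin n ⊕ Fin n → ℝ)
        = Φ (y j) (b i) := rfl
      _ = b.dualBasis j (b i) := by rw [h2]
      _ = if i = j then 1 else 0 := b.dualBasis_apply_self j i
  -- the conjugating matrix
  let col : Fin n ⊕ Fin n → (Fin n ⊕ Fin n → ℝ) :=
    Sum.elim (fun i => (b i : Fin n ⊕ Fin n → ℝ)) (fun j => (y j : Fin n ⊕ Fin n → ℝ))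
  let Q : Matrix (Fin n ⊕ Fin n) (Fin n ⊕ Fin n) ℝ := Matrix.of fun i j => col j i
  have hmulcol : ∀ (A : Matrix (Fin n ⊕ Fin n) (Fin n ⊕ Fin n) ℝ) i j,
      (A * Q) i j = (A *ᵥ col j) i := by
    intro A i j
    simp [Q, Matrix.mul_apply, Matrix.mulVec, dotProduct]
  have hform : ∀ jk kk, (Qᵀ * (_root_.J n * Q)) jk kk = symForm n (col jk) (col kk) := by
    intro jk kk
    simp only [Matrix.mul_apply, Matrix.transpose_apply, symForm, dotProduct,
      Matrix.mulVec, Q, Matrix.of_apply, Finset.mul_sum]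
  have hQJQ : Qᵀ * _root_.J n * Q = _root_.J n := by
    rw [Matrix.mul_assoc]
    ext jk kk
    rw [hform]
    rcases jk with j | j <;> rcases kk with k | k
    · have := hisoP _ (b j).2 _ (b k).2
      simpa [_root_.J, col] using this
    · have := hpair j k
      simpa [_root_.J, col, Matrix.one_apply] using this
    · have h1 := symForm_antisymm (n := n) (col (Sum.inr j)) (col (Sum.inl k))
      have h2 := hpair k j
      rw [h1]
      simp only [col, Sum.elim_inl, Sum.elim_inr] at h2 ⊢
      rw [h2]
      simp [_root_.J, Matrix.one_apply, eq_comm]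
    · have := hisoM _ (y j).2 _ (y k).2
      simpa [_root_.J, col] using this
  have hdetQ : IsUnit Q.det := by
    have hJu : IsUnit (_root_.J n).det := Matrix.isUnit_det_of_right_inverse (J_mul_negJ n)
    have h := congrArg Matrix.det hQJQ
    rw [Matrix.det_mul, Matrix.det_mul, Matrix.det_transpose] at h
    rw [isUnit_iff_ne_zero]
    intro h0
    rw [h0] at h
    simp at h
    exact hJu.ne_zero h.symm
  have hSQ : S * Q = Q * Rmat n := by
    ext i jk
    rw [hmulcol, Rmat_diag, Matrix.mul_diagonal]
    rcases jk with j | j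
    · have hb : S *ᵥ col (Sum.inl j) = col (Sum.inl j) := (memP _).1 (b j).2
      rw [hb]
      simp [Q, col]
    · have hb : S *ᵥ col (Sum.inr j) = -(col (Sum.inr j)) := (memM _).1 (y j).2
      rw [hb]
      simp [Q, col]
  exact ⟨Q, hQJQ, hSQ, hdetQ⟩

end Stmt8Aux

theorem stmt8 (n : ℕ) (φ T S : Matrix (Fin n ⊕ Fin n) (Fin n ⊕ Fin n) ℝ)
    (hφ : IsSymplectic n φ) (hT : IsAntiSympInv n T) (hS : IsAntiSympInv n S)
    (hTS : φ = T * S) :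
    ∃ ψ : Matrix (Fin n ⊕ Fin n) (Fin n ⊕ Fin n) ℝ, IsSymplectic n ψ ∧
      IsSymplectic n (ψ * φ * ψ⁻¹) ∧
      ψ * φ * ψ⁻¹ = Rmat n * (ψ * φ * ψ⁻¹)⁻¹ * Rmat n := by
  classical
  obtain ⟨Q, hQJQ, hSQ, hdet⟩ := Stmt8Aux.exists_conj n S hS
  have h1 : Q * Q⁻¹ = 1 := Matrix.mul_nonsing_inv Q hdet
  have h2 : Q⁻¹ * Q = 1 := Matrix.nonsing_inv_mul Q hdet
  have hinv : Q⁻¹⁻¹ = Q := Matrix.nonsing_inv_nonsing_inv Q hdet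
  have hQsym : IsSymplectic n Q := Stmt8Aux.isSymplectic_of_matrix hQJQ
  have hQisym : IsSymplectic n Q⁻¹ := by
    apply Stmt8Aux.isSymplectic_of_matrix
    calc (Q⁻¹)ᵀ * J n * Q⁻¹ = (Q⁻¹)ᵀ * (Qᵀ * J n * Q) * Q⁻¹ := by rw [hQJQ]
      _ = (Q⁻¹)ᵀ * Qᵀ * J n * (Q * Q⁻¹) := by
          simp only [Matrix.mul_assoc]
      _ = (Q * Q⁻¹)ᵀ * J n * (Q * Q⁻¹) := by rw [Matrix.transpose_mul]
      _ = J n := by rw [h1, Matrix.transpose_one, Matrix.one_mul, Matrix.mul_one]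
  refine ⟨Q⁻¹, hQisym, ?_, ?_⟩
  · rw [hinv]
    exact Stmt8Aux.isSymplectic_mul (Stmt8Aux.isSymplectic_mul hQisym hφ) hQsym
  · rw [hinv]
    set T' : Matrix (Fin n ⊕ Fin n) (Fin n ⊕ Fin n) ℝ := Q⁻¹ * T * Q with hT'
    have hF : Q⁻¹ * φ * Q = T' * Rmat n := by
      rw [hTS, hT']
      calc Q⁻¹ * (T * S) * Q = Q⁻¹ * T * (S * Q) := by simp only [Matrix.mul_assoc]
        _ = Q⁻¹ * T * (Q * Rmat n) := by rw [hSQ]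
        _ = Q⁻¹ * T * Q * Rmat n := by simp only [Matrix.mul_assoc]
    have hT'2 : T' * T' = 1 := by
      rw [hT']
      calc Q⁻¹ * T * Q * (Q⁻¹ * T * Q) = Q⁻¹ * T * (Q * Q⁻¹) * T * Q := by
            simp only [Matrix.mul_assoc]
        _ = Q⁻¹ * (T * T) * Q := by rw [h1]; simp only [Matrix.mul_one, Matrix.mul_assoc]
        _ = 1 := by rw [hT.1, Matrix.mul_one, h2]
    have hR2 : Rmat n * Rmat n = 1 := Stmt8Aux.Rmat_sq n
    have hFinv : (Q⁻¹ * φ * Q)⁻¹ = Rmat n * T' := by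
      apply Matrix.inv_eq_right_inv
      rw [hF]
      calc T' * Rmat n * (Rmat n * T') = T' * (Rmat n * Rmat n) * T' := by
            simp only [Matrix.mul_assoc]
        _ = T' * T' := by rw [hR2, Matrix.mul_one]
        _ = 1 := hT'2
    rw [hFinv, hF]
    calc T' * Rmat n = (Rmat n * Rmat n) * T' * Rmat n := by rw [hR2, Matrix.one_mul]
      _ = Rmat n * (Rmat n * T') * Rmat n := by simp only [Matrix.mul_assoc]
end
end

section
/- For a fixed Lagrangian subspace L ⊆ ℝ^{2n}, the set of anti-symplectic involutions S with Fix(S) = L is in bijection with the set of Lagrangian complements of L, via S ↦ ker(S + 1). -/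
open Matrix

noncomputable section

lemma mem_ker_add_one {n : ℕ} {S : Matrix (Fin n ⊕ Fin n) (Fin n ⊕ Fin n) ℝ}
    {v : Fin n ⊕ Fin n → ℝ} :
    v ∈ LinearMap.ker (S + 1).mulVecLin ↔ S.mulVec v = -v := by
  rw [LinearMap.mem_ker, Matrix.mulVecLin_apply, Matrix.add_mulVec, Matrix.one_mulVec,
    add_eq_zero_iff_eq_neg]

lemma mem_ker_sub_one {n : ℕ} {S : Matrix (Fin n ⊕ Fin n) (Fin n ⊕ Fin n) ℝ}
    {v : Fin n ⊕ Fin n → ℝ} :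
    v ∈ LinearMap.ker (S - 1).mulVecLin ↔ S.mulVec v = v := by
  rw [LinearMap.mem_ker, Matrix.mulVecLin_apply, Matrix.sub_mulVec, Matrix.one_mulVec,
    sub_eq_zero]

lemma matrix_eq_of_mulVecLin {m : Type*} [Fintype m] [DecidableEq m]
    {M N : Matrix m m ℝ} (h : M.mulVecLin = N.mulVecLin) : M = N :=
  Matrix.toLin'.injective h

lemma finrank_total (n : ℕ) : Module.finrank ℝ (Fin n ⊕ Fin n → ℝ) = n + n := by
  simp [Module.finrank_pi]

theorem stmt13 (n : ℕ) (L : Submodule ℝ (Fin n ⊕ Fin n → ℝ))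
    (hL : IsLagrangian n L) :
    Set.BijOn (fun S : Matrix (Fin n ⊕ Fin n) (Fin n ⊕ Fin n) ℝ =>
        LinearMap.ker (S + 1).mulVecLin)
      {S | IsAntiSympInv n S ∧ LinearMap.ker (S - 1).mulVecLin = L}
      {L' | IsLagrangian n L' ∧ IsCompl L L'} := by
  obtain ⟨hLrank, hLiso⟩ := hL
  refine ⟨?_, ?_, ?_⟩
  · -- MapsTo
    rintro S ⟨⟨hS2, hSω⟩, hker⟩
    simp only [Set.mem_setOf_eq]
    have hfix : ∀ v : Fin n ⊕ Fin n → ℝ, S.mulVec v = v ↔ v ∈ L := by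
      intro v; rw [← hker, mem_ker_sub_one]
    have hSS : ∀ v : Fin n ⊕ Fin n → ℝ, S.mulVec (S.mulVec v) = v := by
      intro v; rw [Matrix.mulVec_mulVec, hS2, Matrix.one_mulVec]
    have hcompl : IsCompl L (LinearMap.ker (S + 1).mulVecLin) := by
      constructor
      · rw [Submodule.disjoint_def]
        intro v hv hv'
        have h1 : S.mulVec v = v := (hfix v).2 hv
        have h2 : S.mulVec v = -v := mem_ker_add_one.1 hv'
        have hvn : v = -v := h1.symm.trans h2
        have h3 : v + v = 0 := eq_neg_iff_add_eq_zero.mp hvn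
        have h4 : (2 : ℝ) • v = 0 := by rw [two_smul]; exact h3
        exact (smul_eq_zero.mp h4).resolve_left two_ne_zero
      · rw [codisjoint_iff, eq_top_iff]
        intro v _
        have ha : (2⁻¹ : ℝ) • (v + S.mulVec v) ∈ L := by
          apply (hfix _).1
          rw [Matrix.mulVec_smul, Matrix.mulVec_add, hSS, add_comm]
        have hb : (2⁻¹ : ℝ) • (v - S.mulVec v) ∈ LinearMap.ker (S + 1).mulVecLin := by
          rw [mem_ker_add_one, Matrix.mulVec_smul, Matrix.mulVec_sub, hSS, ← smul_neg, neg_sub]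
        have hv : v = (2⁻¹ : ℝ) • (v + S.mulVec v) + (2⁻¹ : ℝ) • (v - S.mulVec v) := by
          funext i
          simp only [Pi.add_apply, Pi.smul_apply, Pi.sub_apply, smul_eq_mul]
          ring
        rw [hv]
        exact Submodule.add_mem _ (Submodule.mem_sup_left ha) (Submodule.mem_sup_right hb)
    refine ⟨⟨?_, ?_⟩, hcompl⟩
    · have hrank := Submodule.finrank_add_eq_of_isCompl hcompl
      rw [hLrank, finrank_total] at hrank
      omega
    · intro v hv w hw
      have hv' : S.mulVec v = -v := mem_ker_add_one.1 hv
      have hw' : S.mulVec w = -w := mem_ker_add_one.1 hw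
      have h := hSω v w
      rw [hv', hw'] at h
      simp only [symForm, Matrix.mulVec_neg, dotProduct_neg, neg_dotProduct, neg_neg] at h
      simp only [symForm]
      linarith
  · -- InjOn
    rintro S₁ ⟨⟨hS₁2, _⟩, hker₁⟩ S₂ ⟨⟨hS₂2, _⟩, hker₂⟩ hEq
    simp only at hEq
    have hSS₁ : ∀ v : Fin n ⊕ Fin n → ℝ, S₁.mulVec (S₁.mulVec v) = v := by
      intro v; rw [Matrix.mulVec_mulVec, hS₁2, Matrix.one_mulVec]
    apply matrix_eq_of_mulVecLin
    refine LinearMap.ext fun v => ?_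
    set a : Fin n ⊕ Fin n → ℝ := (2⁻¹ : ℝ) • (v + S₁.mulVec v) with ha_def
    set b : Fin n ⊕ Fin n → ℝ := (2⁻¹ : ℝ) • (v - S₁.mulVec v) with hb_def
    have ha1 : S₁.mulVec a = a := by
      rw [ha_def, Matrix.mulVec_smul, Matrix.mulVec_add, hSS₁, add_comm]
    have hb1 : S₁.mulVec b = -b := by
      rw [hb_def, Matrix.mulVec_smul, Matrix.mulVec_sub, hSS₁, ← smul_neg, neg_sub]
    have haL : a ∈ L := by rw [← hker₁]; exact mem_ker_sub_one.2 ha1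
    have hbK : b ∈ LinearMap.ker (S₁ + 1).mulVecLin := mem_ker_add_one.2 hb1
    have ha2 : S₂.mulVec a = a := mem_ker_sub_one.1 (hker₂ ▸ haL)
    have hb2 : S₂.mulVec b = -b := mem_ker_add_one.1 (hEq ▸ hbK)
    have hvab : v = a + b := by
      funext i
      simp only [ha_def, hb_def, Pi.add_apply, Pi.smul_apply, Pi.sub_apply, smul_eq_mul]
      ring
    show S₁.mulVec v = S₂.mulVec v
    rw [hvab, Matrix.mulVec_add, Matrix.mulVec_add, ha1, hb1, ha2, hb2]
  · -- SurjOn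
    rintro L' ⟨⟨hrank', hiso'⟩, hcompl⟩
    set π := L.projectionOnto L' hcompl with hπ_def
    set T : (Fin n ⊕ Fin n → ℝ) →ₗ[ℝ] (Fin n ⊕ Fin n → ℝ) :=
      (2 : ℝ) • (L.subtype ∘ₗ π) - LinearMap.id with hT_def
    set S := LinearMap.toMatrix' T with hS_def
    have hml : S.mulVecLin = T := Matrix.toLin'_toMatrix' T
    have hmv : ∀ v, S.mulVec v = (2 : ℝ) • ((π v : Fin n ⊕ Fin n → ℝ)) - v := by
      intro v
      rw [← Matrix.mulVecLin_apply, hml]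
      simp [hT_def]
    have hπL : ∀ v ∈ L, ((π v : Fin n ⊕ Fin n → ℝ)) = v := by
      intro v hv
      exact congrArg Subtype.val (Submodule.projectionOnto_apply_left hcompl ⟨v, hv⟩)
    have hbL' : ∀ v : Fin n ⊕ Fin n → ℝ, v - (π v : Fin n ⊕ Fin n → ℝ) ∈ L' := by
      intro v
      rw [← Submodule.projectionOnto_apply_eq_zero_iff (p := L) hcompl]
      have : π ((π v : Fin n ⊕ Fin n → ℝ)) = π v :=
        Submodule.projectionOnto_apply_left hcompl (π v)
      rw [map_sub, this, sub_self]
    refine ⟨S, ⟨⟨?_, ?_⟩, ?_⟩, ?_⟩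
    · -- S * S = 1
      apply matrix_eq_of_mulVecLin
      rw [Matrix.mulVecLin_mul, Matrix.mulVecLin_one, hml]
      refine LinearMap.ext fun v => ?_
      have h1 : T v = (2 : ℝ) • ((π v : Fin n ⊕ Fin n → ℝ)) - v := by simp [hT_def]
      have h2 : π (T v) = π v := by
        rw [h1, map_sub, _root_.map_smul,
          Submodule.projectionOnto_apply_left hcompl (π v), two_smul,
          add_sub_cancel_right]
      show T (T v) = v
      have h3 : T (T v) = (2 : ℝ) • ((π (T v) : Fin n ⊕ Fin n → ℝ)) - T v := by
        simp [hT_def]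
      rw [h3, h2, h1]
      module
    · -- anti-symplectic
      intro v w
      set a : Fin n ⊕ Fin n → ℝ := (π v : Fin n ⊕ Fin n → ℝ) with ha_def
      set c : Fin n ⊕ Fin n → ℝ := (π w : Fin n ⊕ Fin n → ℝ) with hc_def
      have hac : symForm n a c = 0 := hLiso a (π v).2 c (π w).2
      have hbd : symForm n (v - a) (w - c) = 0 := hiso' _ (hbL' v) _ (hbL' w)
      rw [hmv v, hmv w]
      have e1 : (2 : ℝ) • a - v = a - (v - a) := by module
      have e2 : (2 : ℝ) • c - w = c - (w - c) := by module
      have e3 : v = a + (v - a) := by module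
      have e4 : w = c + (w - c) := by module
      rw [e1, e2]
      conv_rhs => rw [e3, e4]
      simp only [symForm] at hac hbd ⊢
      simp only [Matrix.mulVec_sub, Matrix.mulVec_add, dotProduct_sub, dotProduct_add,
        sub_dotProduct, add_dotProduct] at hac hbd ⊢
      linarith
    · -- ker (S - 1) = L
      ext v
      rw [mem_ker_sub_one, hmv v]
      constructor
      · intro h
        have h2 : (2 : ℝ) • ((π v : Fin n ⊕ Fin n → ℝ)) = (2 : ℝ) • v := by
          have h' := sub_eq_iff_eq_add.mp h
          rw [h']; module
        have h3 : ((π v : Fin n ⊕ Fin n → ℝ)) = v :=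
          smul_right_injective _ (two_ne_zero) h2
        rw [← h3]; exact (π v).2
      · intro hv
        rw [hπL v hv, two_smul, add_sub_cancel_right]
    · -- ker (S + 1) = L'
      show LinearMap.ker (S + 1).mulVecLin = L'
      ext v
      rw [mem_ker_add_one, hmv v]
      constructor
      · intro h
        have h0 : (2 : ℝ) • ((π v : Fin n ⊕ Fin n → ℝ)) = 0 := by
          have h' := sub_eq_iff_eq_add.mp h
          rw [h']; module
        have h1 : ((π v : Fin n ⊕ Fin n → ℝ)) = 0 :=
          (smul_eq_zero.mp h0).resolve_left two_ne_zero
        have h2 : π v = 0 := Subtype.ext h1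
        exact (Submodule.projectionOnto_apply_eq_zero_iff hcompl).mp h2
      · intro hv
        have h2 : π v = 0 :=
          (Submodule.projectionOnto_apply_eq_zero_iff hcompl).mpr hv
        rw [h2]
        simp
end
end
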